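/- For every real number x with 1 ≤ x, the Gamma function satisfies √(2πx) · x^x · e^{-x} < Γ(x + 1). -/

import Mathlib

open Real

open Filter Topology

/-- `2t/(2+t) < log (1+t)` for `t > 0`. -/
lemma aux_log_lower {t : ℝ} (ht : 0 < t) : 2 * t / (2 + t) < Real.log (1 + t) := by
  have h : StrictMonoOn (fun t : ℝ => Real.log (1 + t) - 2 * t / (2 + t)) (Set.Ici 0) := by
    apply strictMonoOn_of_deriv_pos (convex_Ici 0)
    · apply ContinuousOn.sub
      · exact Real.continuousOn_log.comp (by fun_prop) (fun y hy => by
          simp only [Set.mem_Ici] at hy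
          simp only [Set.mem_compl_iff, Set.mem_singleton_iff]
          positivity)
      · apply ContinuousOn.div (by fun_prop) (by fun_prop)
        intro y hy; simp only [Set.mem_Ici] at hy; positivity
    · intro y hy
      simp only [interior_Ici, Set.mem_Ioi] at hy
      have h1 : (0:ℝ) < 1 + y := by linarith
      have h2 : (0:ℝ) < 2 + y := by linarith
      have hd : HasDerivAt (fun t : ℝ => Real.log (1 + t) - 2 * t / (2 + t))
          (1 / (1 + y) - (2 * 1 * (2 + y) - 2 * y * 1) / (2 + y) ^ 2) y := by
        have hlog : HasDerivAt (fun t : ℝ => Real.log (1 + t)) (1 / (1 + y)) y := by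
          have := ((hasDerivAt_id y).const_add 1).log h1.ne'
          simpa using this
        exact hlog.sub (((hasDerivAt_id y).const_mul 2).div ((hasDerivAt_id y).const_add 2) h2.ne')
      rw [hd.deriv]
      rw [div_sub_div _ _ h1.ne' (by positivity), div_pos_iff]
      left
      constructor
      · nlinarith [sq_nonneg y]
      · positivity
  have := h (Set.self_mem_Ici) (Set.mem_Ici.mpr ht.le) ht
  simpa using this

noncomputable def gSt (x : ℝ) : ℝ :=
  Real.log (Real.Gamma (x + 1)) - (x + 1/2) * Real.log x + x

lemma gSt_step {x : ℝ} (hx : 0 < x) : gSt (x + 1) < gSt x := by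
  have hG : Real.Gamma (x + 1 + 1) = (x + 1) * Real.Gamma (x + 1) :=
    Real.Gamma_add_one (by positivity)
  have hGpos : 0 < Real.Gamma (x + 1) := Real.Gamma_pos_of_pos (by positivity)
  have hlogG : Real.log (Real.Gamma (x + 1 + 1)) =
      Real.log (x + 1) + Real.log (Real.Gamma (x + 1)) := by
    rw [hG, Real.log_mul (by positivity) hGpos.ne']
  have hkey : 1 < (x + 1/2) * (Real.log (x + 1) - Real.log x) := by
    have h1 : Real.log (x + 1) - Real.log x = Real.log (1 + 1/x) := by
      rw [← Real.log_div (by positivity) hx.ne']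
      congr 1
      field_simp
    have h2 := aux_log_lower (t := 1/x) (by positivity)
    rw [h1]
    have h3 : (x + 1/2) * (2 * (1/x) / (2 + 1/x)) = 1 := by
      field_simp
    calc 1 = (x + 1/2) * (2 * (1/x) / (2 + 1/x)) := h3.symm
    _ < (x + 1/2) * Real.log (1 + 1/x) := by
        apply mul_lt_mul_of_pos_left h2 (by positivity)
  simp only [gSt, hlogG]
  nlinarith [hkey]

lemma gSt_prod {x : ℝ} (hx : 0 < x) (n : ℕ) :
    (∏ j ∈ Finset.range (n + 1), (x + j)) * Real.Gamma x = Real.Gamma (x + (n + 1)) := by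
  induction n with
  | zero => simp [Real.Gamma_add_one hx.ne']
  | succ n ih =>
      rw [Finset.prod_range_succ, mul_comm _ (x + ((n+1 : ℕ):ℝ)), mul_assoc, ih]
      push_cast
      rw [show x + ((n:ℝ) + 1 + 1) = (x + ((n:ℝ) + 1)) + 1 by ring,
        Real.Gamma_add_one (by positivity)]

/-- Euler limit: `log Γ(x+n+1) - log n! - x log n → 0`. -/
lemma gSt_C1 {x : ℝ} (hx : 0 < x) :
    Tendsto (fun n : ℕ => Real.log (Real.Gamma (x + n + 1)) - Real.log (n.factorial) -
      x * Real.log n) atTop (𝓝 0) := by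
  have hGx : 0 < Real.Gamma x := Real.Gamma_pos_of_pos hx
  have h1 : Tendsto (fun n : ℕ => Real.GammaSeq x n / Real.Gamma x) atTop (𝓝 1) := by
    have := (Real.GammaSeq_tendsto_Gamma x).div_const (Real.Gamma x)
    rwa [div_self hGx.ne'] at this
  have h2 : Tendsto (fun n : ℕ => Real.log (Real.GammaSeq x n / Real.Gamma x)) atTop (𝓝 0) := by
    have := ((Real.continuousAt_log (by norm_num : (1:ℝ) ≠ 0)).tendsto.comp h1)
    simpa [Function.comp_def] using this
  have h3 : ∀ᶠ n : ℕ in atTop, Real.log (Real.GammaSeq x n / Real.Gamma x) =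
      x * Real.log n + Real.log (n.factorial) - Real.log (Real.Gamma (x + n + 1)) := by
    filter_upwards [eventually_ge_atTop 1] with n hn
    have hn0 : (0:ℝ) < n := by exact_mod_cast hn
    have hGxn : 0 < Real.Gamma (x + n + 1) := Real.Gamma_pos_of_pos (by positivity)
    have hfac : (0:ℝ) < n.factorial := by exact_mod_cast n.factorial_pos
    have hprod : (∏ j ∈ Finset.range (n + 1), (x + j)) = Real.Gamma (x + n + 1) / Real.Gamma x := by
      rw [eq_div_iff hGx.ne', gSt_prod hx n]
      ring_nf
    have harg : (n:ℝ) ^ x * n.factorial / (Real.Gamma (x + n + 1) / Real.Gamma x) / Real.Gamma x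
        = (n:ℝ) ^ x * n.factorial / Real.Gamma (x + n + 1) := by
      field_simp
    rw [Real.GammaSeq, hprod, harg,
      Real.log_div (by positivity) hGxn.ne',
      Real.log_mul (by positivity) hfac.ne', Real.log_rpow hn0]
  have h4 := h2.neg
  rw [neg_zero] at h4
  apply h4.congr'
  filter_upwards [h3] with n hn
  rw [hn]; ring

/-- Stirling: `log n! - ½ log(2πn) - n log n + n → 0`. -/
lemma gSt_C2 :
    Tendsto (fun n : ℕ => Real.log (n.factorial) - 1/2 * Real.log (2 * π * n) -
      n * Real.log n + n) atTop (𝓝 0) := by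
  have h1 : Tendsto (fun n : ℕ => Real.log (Stirling.stirlingSeq n) - 1/2 * Real.log π)
      atTop (𝓝 0) := by
    have hl : Tendsto (fun n : ℕ => Real.log (Stirling.stirlingSeq n)) atTop
        (𝓝 (Real.log (Real.sqrt π))) :=
      ((Real.continuousAt_log (by positivity : Real.sqrt π ≠ 0)).tendsto.comp
        Stirling.tendsto_stirlingSeq_sqrt_pi)
    rw [Real.log_sqrt pi_pos.le] at hl
    have := hl.sub_const (Real.log π / 2)
    simpa [sub_self, one_div, div_eq_inv_mul] using this.congr (fun n => by ring)
  apply h1.congr'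
  filter_upwards [eventually_ge_atTop 1] with n hn
  have hn0 : (0:ℝ) < n := by exact_mod_cast hn
  rw [Stirling.log_stirlingSeq_formula]
  rw [Real.log_div hn0.ne' (Real.exp_pos 1).ne', Real.log_exp,
    show (2:ℝ) * π * n = 2 * n * π by ring,
    Real.log_mul (by positivity) pi_pos.ne']
  ring

lemma gSt_C3 {x : ℝ} (hx : 0 < x) :
    Tendsto (fun n : ℕ => (x + n + 1/2) * (Real.log (x + n) - Real.log n)) atTop (𝓝 x) := by
  have key : ∀ᶠ n : ℕ in atTop, (x + n + 1/2) * (Real.log (x + n) - Real.log n) =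
      (n : ℝ) * Real.log (1 + x / n) + (x + 1/2) * Real.log (1 + x / n) := by
    filter_upwards [eventually_ge_atTop 1] with n hn
    have hn0 : (0:ℝ) < n := by exact_mod_cast hn
    have : Real.log (x + n) - Real.log n = Real.log (1 + x / n) := by
      rw [← Real.log_div (by positivity) hn0.ne']
      congr 1
      field_simp
      ring
    rw [this]; ring
  have h1 : Tendsto (fun n : ℕ => (n : ℝ) * Real.log (1 + x / n)) atTop (𝓝 x) := by
    have hp := Real.tendsto_one_add_div_pow_exp x
    have := (Real.continuousAt_log (Real.exp_pos x).ne').tendsto.comp hp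
    rw [Real.log_exp] at this
    apply this.congr
    intro n
    simp [Function.comp_apply, Real.log_pow]
  have h2 : Tendsto (fun n : ℕ => (x + 1/2) * Real.log (1 + x / n)) atTop (𝓝 0) := by
    have hd : Tendsto (fun n : ℕ => 1 + x / n) atTop (𝓝 1) := by
      have := tendsto_const_div_atTop_nhds_zero_nat x
      simpa using (this.const_add 1)
    have := ((Real.continuousAt_log one_ne_zero).tendsto.comp hd).const_mul (x + 1/2)
    simpa using this
  have := h1.add h2
  rw [add_zero] at this
  exact this.congr' (by filter_upwards [key] with n h using h.symm)

lemma gSt_tendsto {x : ℝ} (hx : 0 < x) :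
    Tendsto (fun n : ℕ => gSt (x + n)) atTop (𝓝 (1/2 * Real.log (2 * π))) := by
  have hA := gSt_C1 hx
  have hB := gSt_C2
  have hC : Tendsto (fun n : ℕ => 1/2 * Real.log (2 * π) + x -
      (x + n + 1/2) * (Real.log (x + n) - Real.log n)) atTop (𝓝 (1/2 * Real.log (2*π))) := by
    have := (tendsto_const_nhds (x := (1/2 * Real.log (2 * π) + x))).sub (gSt_C3 hx)
    simpa using this
  have hsum := (hA.add hB).add hC
  rw [add_zero, zero_add] at hsum
  apply hsum.congr'
  filter_upwards [eventually_ge_atTop 1] with n hn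
  have hn0 : (0:ℝ) < n := by exact_mod_cast hn
  have hlog : Real.log (2 * π * n) = Real.log (2 * π) + Real.log n :=
    Real.log_mul (by positivity) hn0.ne'
  simp only [gSt, hlog]
  ring

/-- Lower Stirling bound for the Gamma function:
`√(2πx) · x^x · e^{-x} < Γ(x+1)` for all real `x ≥ 1`. -/
theorem sqrt_two_pi_mul_rpow_mul_exp_lt_Gamma (x : ℝ) (hx : 1 ≤ x) :
    Real.sqrt (2 * π * x) * x ^ x * Real.exp (-x) < Real.Gamma (x + 1) := by
  have hx0 : 0 < x := lt_of_lt_of_le one_pos hx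
  have hanti : Antitone (fun n : ℕ => gSt (x + 1 + n)) := by
    apply antitone_nat_of_succ_le
    intro n
    have := gSt_step (x := x + 1 + n) (by positivity)
    push_cast
    calc gSt (x + 1 + (n + 1)) = gSt (x + 1 + n + 1) := by ring_nf
    _ ≤ gSt (x + 1 + n) := this.le
  have htend : Tendsto (fun n : ℕ => gSt (x + 1 + n)) atTop (𝓝 (1/2 * Real.log (2 * π))) :=
    gSt_tendsto (by positivity)
  have hge : 1/2 * Real.log (2 * π) ≤ gSt (x + 1) := by
    have := hanti.le_of_tendsto htend 0
    simpa using this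
  have hlt : 1/2 * Real.log (2 * π) < gSt x := lt_of_le_of_lt hge (gSt_step hx0)
  have hkey : (x + 1/2) * Real.log x - x + 1/2 * Real.log (2 * π) <
      Real.log (Real.Gamma (x + 1)) := by
    simp only [gSt] at hlt
    linarith
  have hGpos : 0 < Real.Gamma (x + 1) := Real.Gamma_pos_of_pos (by positivity)
  have := Real.exp_lt_exp.mpr hkey
  rw [Real.exp_log hGpos] at this
  refine lt_of_eq_of_lt ?_ this
  have e1 : Real.exp ((x + 1/2) * Real.log x) = x ^ x * Real.sqrt x := by
    rw [mul_comm, ← Real.rpow_def_of_pos hx0, Real.rpow_add hx0, Real.sqrt_eq_rpow]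
  have e2 : Real.exp (1/2 * Real.log (2 * π)) = Real.sqrt (2 * π) := by
    rw [mul_comm, ← Real.rpow_def_of_pos (by positivity), Real.sqrt_eq_rpow]
  rw [Real.exp_add, Real.exp_sub, e1, e2, show (2:ℝ) * π * x = (2 * π) * x by ring,
    Real.sqrt_mul (by positivity), Real.exp_neg]
  field_simp
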